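/- arXiv:2511.03335 — 2 statements merged into one kernel-verified Lean document; each statement's English description precedes it below -/
import Mathlib

section
/- Let 𝒢 be a family of signed graphs. There exists a constant c such that χ_b(G, σ) ≤ c for every (G, σ) ∈ 𝒢 if and only if there exists a constant c' such that χ((G, σ)⁻) ≤ c' for every (G, σ) ∈ 𝒢. -/
open SimpleGraph

namespace SignedGS

variable {V : Type*}

/-- The sign of a walk in a signed graph: the product of the signs of its edges. -/
def walkSign {G : SimpleGraph V} (σ : Sym2 V → ℤˣ) {u v : V} (w : G.Walk u v) : ℤˣ :=
  (w.edges.map σ).prod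

/-- `X` is a balanced set of `(G, σ)`: every cycle of the subgraph induced on `X`
is positive. -/
def IsBalancedSet (G : SimpleGraph V) (σ : Sym2 V → ℤˣ) (X : Set V) : Prop :=
  ∀ ⦃v : V⦄ (w : G.Walk v v), w.IsCycle → (∀ u ∈ w.support, u ∈ X) → walkSign σ w = 1

/-- `(G, σ)` can be covered by `n` balanced sets. -/
def BalancedColorable (G : SimpleGraph V) (σ : Sym2 V → ℤˣ) (n : ℕ) : Prop :=
  ∃ f : V → Fin n, ∀ i : Fin n, IsBalancedSet G σ {v | f v = i}

/-- The balanced chromatic number of `(G, σ)`. -/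
noncomputable def balancedChromNum (G : SimpleGraph V) (σ : Sym2 V → ℤˣ) : ℕ :=
  sInf {n | BalancedColorable G σ n}

/-- The set `X ⊆ V` can be covered by `n` sets each of which is balanced in `(G, σ)`. -/
def BalancedColorableOn (G : SimpleGraph V) (σ : Sym2 V → ℤˣ) (X : Set V) (n : ℕ) : Prop :=
  ∃ f : V → Fin n, ∀ i : Fin n, IsBalancedSet G σ {v | v ∈ X ∧ f v = i}

/-- The balanced chromatic number of the signed subgraph of `(G, σ)` induced on `X`. -/
noncomputable def balancedChromNumOn (G : SimpleGraph V) (σ : Sym2 V → ℤˣ) (X : Set V) : ℕ :=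
  sInf {n | BalancedColorableOn G σ X n}

/-- `(G, σ)⁻` : the spanning subgraph of `G` consisting of the negative edges. -/
def negSubgraph (G : SimpleGraph V) (σ : Sym2 V → ℤˣ) : SimpleGraph V where
  Adj u v := G.Adj u v ∧ σ s(u, v) = -1
  symm := by
    constructor
    intro u v h
    refine ⟨h.1.symm, ?_⟩
    rw [Sym2.eq_swap]
    exact h.2
  loopless := by constructor; intro v h; exact G.loopless.irrefl v h.1

/-- Two signatures on `G` are switching equivalent. -/
def SwitchEquiv (G : SimpleGraph V) (σ σ' : Sym2 V → ℤˣ) : Prop :=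
  ∃ η : V → ℤˣ, ∀ u v : V, G.Adj u v → σ' s(u, v) = η u * σ s(u, v) * η v

/-- Every triangle of `(G, σ)` is positive. -/
def AllTrianglesPositive (G : SimpleGraph V) (σ : Sym2 V → ℤˣ) : Prop :=
  ∀ u v w : V, G.Adj u v → G.Adj v w → G.Adj u w →
    σ s(u, v) * σ s(v, w) * σ s(u, w) = 1

/-- `G` contains an induced copy of `F`. -/
def HasInducedCopy {W : Type*} (F : SimpleGraph W) (G : SimpleGraph V) : Prop :=
  ∃ f : W ↪ V, ∀ a b : W, G.Adj (f a) (f b) ↔ F.Adj a b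

/-- The star `K_{1,m}` with center `0` and `m` leaves. -/
def starGraph (m : ℕ) : SimpleGraph (Fin (m + 1)) where
  Adj a b := (a = 0 ∨ b = 0) ∧ a ≠ b
  symm := by constructor; rintro a b ⟨h1, h2⟩; exact ⟨h1.symm, h2.symm⟩
  loopless := by constructor; rintro a ⟨_, h⟩; exact h rfl

private def disjUnionAdj {W1 W2 : Type*} (F1 : SimpleGraph W1) (F2 : SimpleGraph W2) :
    W1 ⊕ W2 → W1 ⊕ W2 → Prop
  | .inl x, .inl y => F1.Adj x y
  | .inr x, .inr y => F2.Adj x y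
  | _, _ => False

/-- The disjoint union `F1 + F2` of two graphs. -/
def disjUnion {W1 W2 : Type*} (F1 : SimpleGraph W1) (F2 : SimpleGraph W2) :
    SimpleGraph (W1 ⊕ W2) where
  Adj := disjUnionAdj F1 F2
  symm := by
    constructor
    rintro (x | x) (y | y) h
    · exact F1.adj_symm h
    · exact h.elim
    · exact h.elim
    · exact F2.adj_symm h
  loopless := by
    constructor
    rintro (x | x) h
    · exact F1.loopless.irrefl x h
    · exact F2.loopless.irrefl x h

private def fullJoinAdj {W1 W2 : Type*} (G1 : SimpleGraph W1) (G2 : SimpleGraph W2) :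
    W1 ⊕ W2 → W1 ⊕ W2 → Prop
  | .inl x, .inl y => G1.Adj x y
  | .inr x, .inr y => G2.Adj x y
  | _, _ => True

/-- The full join `G1 ⋈ G2` of two vertex-disjoint graphs. -/
def fullJoin {W1 W2 : Type*} (G1 : SimpleGraph W1) (G2 : SimpleGraph W2) :
    SimpleGraph (W1 ⊕ W2) where
  Adj := fullJoinAdj G1 G2
  symm := by
    constructor
    rintro (x | x) (y | y) h
    · exact G1.adj_symm h
    · trivial
    · trivial
    · exact G2.adj_symm h
  loopless := by
    constructor
    rintro (x | x) h
    · exact G1.loopless.irrefl x h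
    · exact G2.loopless.irrefl x h

/-- The linear forest with `l` components, the `i`-th component being a path
on `m i` vertices. -/
def linearForest (l : ℕ) (m : Fin l → ℕ) : SimpleGraph (Σ i : Fin l, Fin (m i)) where
  Adj a b := a.1 = b.1 ∧ ((a.2 : ℕ) + 1 = (b.2 : ℕ) ∨ (b.2 : ℕ) + 1 = (a.2 : ℕ))
  symm := by constructor; rintro a b ⟨h1, h2⟩; exact ⟨h1.symm, h2.symm⟩
  loopless := by constructor; rintro a ⟨_, h⟩; omega

/-- `(G, σ)` has an induced subgraph switching equivalent to the all-negative `K_4`. -/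
def HasSwitchK4Neg (G : SimpleGraph V) (σ : Sym2 V → ℤˣ) : Prop :=
  ∃ f : Fin 4 ↪ V, (∀ a b : Fin 4, a ≠ b → G.Adj (f a) (f b)) ∧
    ∃ η : Fin 4 → ℤˣ, ∀ a b : Fin 4, a ≠ b → η a * σ s(f a, f b) * η b = -1

/-- `(G, σ)` has a triangle all of whose edges are negative. -/
def HasNegTriangle (G : SimpleGraph V) (σ : Sym2 V → ℤˣ) : Prop :=
  ∃ u v w : V, G.Adj u v ∧ G.Adj v w ∧ G.Adj u w ∧
    σ s(u, v) = -1 ∧ σ s(v, w) = -1 ∧ σ s(u, w) = -1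

/-- `(G, σ)` has four vertices inducing a copy of `(K_4, M)`: a complete graph on four
vertices whose negative edges form a perfect matching. -/
def HasK4M (G : SimpleGraph V) (σ : Sym2 V → ℤˣ) : Prop :=
  ∃ a b c d : V, a ≠ b ∧ a ≠ c ∧ a ≠ d ∧ b ≠ c ∧ b ≠ d ∧ c ≠ d ∧
    G.Adj a b ∧ G.Adj a c ∧ G.Adj a d ∧ G.Adj b c ∧ G.Adj b d ∧ G.Adj c d ∧
    σ s(a, b) = -1 ∧ σ s(c, d) = -1 ∧
    σ s(a, c) = 1 ∧ σ s(a, d) = 1 ∧ σ s(b, c) = 1 ∧ σ s(b, d) = 1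

/-- The vertices of the shift graph `S_{k,n}`: strictly increasing `k`-sequences
with values in `{1, …, n}`. -/
def ShiftVertex (k n : ℕ) : Type :=
  {s : Fin k → ℕ // StrictMono s ∧ ∀ i, s i ∈ Finset.Icc 1 n}

/-- `b` is obtained from `a` by shifting: `b = (a_2, …, a_k, t)` for some `t`. -/
def ShiftFollows {k n : ℕ} (a b : ShiftVertex k n) : Prop :=
  ∀ (i : ℕ) (h : i + 1 < k), b.1 ⟨i, Nat.lt_of_succ_lt h⟩ = a.1 ⟨i + 1, h⟩

/-- The shift graph `S_{k,n}`. -/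
def shiftGraph (k n : ℕ) : SimpleGraph (ShiftVertex k n) where
  Adj a b := a ≠ b ∧ (ShiftFollows a b ∨ ShiftFollows b a)
  symm := by constructor; rintro a b ⟨h1, h2⟩; exact ⟨h1.symm, h2.symm⟩
  loopless := by constructor; rintro a ⟨h, _⟩; exact h rfl


section Aux

variable {V : Type*}

private lemma path_edge_length {H : SimpleGraph V} {u v : V} (p : H.Walk v u)
    (hp : p.IsPath) (he : s(u, v) ∈ p.edges) : p.length = 1 := by
  cases p with
  | nil => simp at he
  | @cons _ b _ h q =>
    rw [Walk.edges_cons, List.mem_cons] at he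
    rw [Walk.cons_isPath_iff] at hp
    rcases he with he | he
    · rw [Sym2.eq_iff] at he
      rcases he with ⟨h1, h2⟩ | ⟨h1, h2⟩
      · exact absurd h2 h.ne
      · subst h1
        rw [Walk.isPath_iff_eq_nil.mp hp.1]
        simp
    · exact absurd (q.snd_mem_support_of_mem_edges he) hp.2

private lemma odd_closed_walk_cycle {H : SimpleGraph V} :
    ∀ (n : ℕ) {u : V} (w : H.Walk u u), w.length = n → Odd n →
      ∃ (x : V) (c : H.Walk x x), c.IsCycle ∧ Odd c.length := by
  classical
  intro n
  induction n using Nat.strong_induction_on with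
  | _ n ih =>
  intro u w hl hodd
  cases w with
  | nil =>
    rw [Nat.odd_iff] at hodd
    simp only [Walk.length_nil] at hl
    omega
  | @cons _ b _ h p =>
    by_cases hnd : p.support.Nodup
    · have hp : p.IsPath := (Walk.isPath_def p).mpr hnd
      by_cases he : s(u, b) ∈ p.edges
      · exfalso
        have h1 := path_edge_length p hp he
        rw [Nat.odd_iff] at hodd
        simp only [Walk.length_cons] at hl
        omega
      · exact ⟨u, Walk.cons h p, (Walk.cons_isCycle_iff p h).mpr ⟨hp, he⟩, hl ▸ hodd⟩
    · obtain ⟨x, hx⟩ : ∃ x, 1 < p.support.count x := by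
        by_contra hno
        push_neg at hno
        exact hnd (List.nodup_iff_count_le_one.mpr hno)
      have hxs : x ∈ p.support := by
        rw [← List.count_pos_iff]; omega
      have hspec := p.take_spec hxs
      have hq1 := p.count_support_takeUntil_eq_one hxs
      have hsupp : p.support = (p.takeUntil x hxs).support ++ (p.dropUntil x hxs).support.tail := by
        conv_lhs => rw [← hspec]
        rw [Walk.support_append]
      have hcount : x ∈ (p.dropUntil x hxs).support.tail := by
        rw [hsupp, List.count_append, hq1] at hx
        rw [← List.count_pos_iff]; omega
      have hlen : (p.takeUntil x hxs).length + (p.dropUntil x hxs).length = p.length := by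
        conv_rhs => rw [← hspec]
        rw [Walk.length_append]
      set q := p.takeUntil x hxs with hqdef
      set r := p.dropUntil x hxs with hrdef
      clear_value q r
      cases r with
      | nil => simp at hcount
      | @cons _ y _ h' r' =>
        simp only [Walk.support_cons, List.tail_cons] at hcount
        have hspec' := r'.take_spec hcount
        have hlen' : (r'.takeUntil x hcount).length + (r'.dropUntil x hcount).length
            = r'.length := by
          conv_rhs => rw [← hspec']
          rw [Walk.length_append]
        -- two closed walks at x
        set s := r'.takeUntil x hcount with hsdef
        set t := r'.dropUntil x hcount with htdef
        have c1 : H.Walk x x := Walk.cons h' s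
        have hc1len : (Walk.cons h' s).length = s.length + 1 := by simp
        have hc2len : (t.append (Walk.cons h q)).length = t.length + (q.length + 1) := by
          simp [Walk.length_append]
        have hwl : n = q.length + (s.length + t.length + 1) + 1 := by
          simp only [Walk.length_cons] at hl hlen
          omega
        rw [Nat.odd_iff] at hodd
        rcases Nat.even_or_odd (s.length + 1) with hev1 | hod1
        · -- second walk odd
          have hod2 : Odd (t.length + (q.length + 1)) := by
            rw [Nat.even_iff] at hev1
            rw [Nat.odd_iff]
            omega
          refine ih (t.length + (q.length + 1)) ?_ (t.append (Walk.cons h q)) hc2len hod2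
          rw [Nat.even_iff] at hev1
          omega
        · refine ih (s.length + 1) ?_ (Walk.cons h' s) hc1len hod1
          omega

private lemma exists_bicoloring {H : SimpleGraph V}
    (hev : ∀ (x : V) (c : H.Walk x x), c.IsCycle → Even c.length) :
    ∃ g : V → Bool, ∀ u v, H.Adj u v → g u ≠ g v := by
  classical
  have hclosed : ∀ (u : V) (w : H.Walk u u), Even w.length := by
    intro u w
    rcases Nat.even_or_odd w.length with he | ho
    · exact he
    · obtain ⟨x, c, hc, hco⟩ := odd_closed_walk_cycle _ w rfl ho
      exact absurd (hev x c hc) (Nat.not_even_iff_odd.mpr hco)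
  have hreach : ∀ v : V, H.Reachable (H.connectedComponentMk v).out v := fun v =>
    SimpleGraph.ConnectedComponent.exact (Quot.out_eq _)
  let W : ∀ v : V, H.Walk (H.connectedComponentMk v).out v := fun v => (hreach v).some
  refine ⟨fun v => decide ((W v).length % 2 = 1), ?_⟩
  intro u v h hgu
  have hcc : (H.connectedComponentMk u).out = (H.connectedComponentMk v).out := by
    exact congrArg Quot.out (SimpleGraph.ConnectedComponent.sound h.reachable)
  have c : H.Walk (H.connectedComponentMk u).out (H.connectedComponentMk u).out :=
    (W u).append ((Walk.cons h (W v).reverse).copy rfl hcc.symm)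
  have hce : Even ((W u).append ((Walk.cons h (W v).reverse).copy rfl hcc.symm)).length :=
    hclosed _ _
  rw [Walk.length_append, Walk.length_copy, Walk.length_cons, Walk.length_reverse] at hce
  rw [decide_eq_decide] at hgu
  rw [Nat.even_iff] at hce
  omega

end Aux

section Main

variable {V : Type*}

private lemma balancedColorable_mono {G : SimpleGraph V} {σ : Sym2 V → ℤˣ} {n m : ℕ}
    (h : BalancedColorable G σ n) (hnm : n ≤ m) : BalancedColorable G σ m := by
  obtain ⟨f, hf⟩ := h
  refine ⟨fun v => Fin.castLE hnm (f v), fun i => ?_⟩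
  intro v w hc hsup
  have hv : Fin.castLE hnm (f v) = i := hsup v w.start_mem_support
  apply hf (f v) w hc
  intro u hu
  have hu' : Fin.castLE hnm (f u) = i := hsup u hu
  have : Fin.castLE hnm (f u) = Fin.castLE hnm (f v) := by rw [hu', hv]
  exact (Fin.castLE_injective hnm) this

private lemma balancedColorable_card {G : SimpleGraph V} [Fintype V] (σ : Sym2 V → ℤˣ) :
    BalancedColorable G σ (Fintype.card V) := by
  refine ⟨Fintype.equivFin V, fun i => ?_⟩
  intro v w hc hsup
  exfalso
  cases w with
  | nil => exact hc.ne_nil rfl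
  | @cons _ b _ h p =>
    have hb : b ∈ (Walk.cons h p).support := by
      rw [Walk.support_cons]
      exact List.mem_cons_of_mem _ p.start_mem_support
    have h1 : (Fintype.equivFin V) v = i := hsup v (Walk.cons h p).start_mem_support
    have h2 : (Fintype.equivFin V) b = i := hsup b hb
    exact h.ne ((Fintype.equivFin V).injective (h1.trans h2.symm))

private lemma balanced_of_coloring {G : SimpleGraph V} {σ : Sym2 V → ℤˣ} {n : ℕ}
    (C : (negSubgraph G σ).Coloring (Fin n)) : BalancedColorable G σ n := by
  refine ⟨C, fun i => ?_⟩
  intro v w _hc hsup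
  unfold walkSign
  apply List.prod_eq_one
  intro x hx
  obtain ⟨e, he, rfl⟩ := List.mem_map.mp hx
  revert he
  refine Sym2.ind (fun a b he => ?_) e
  have hadj : G.Adj a b := G.mem_edgeSet.mp (w.edges_subset_edgeSet he)
  have ha : C a = i := hsup a (w.fst_mem_support_of_mem_edges he)
  have hb : C b = i := hsup b (w.snd_mem_support_of_mem_edges he)
  have hne : ¬ (negSubgraph G σ).Adj a b := fun hN => C.valid hN (ha.trans hb.symm)
  rcases Int.units_eq_one_or (σ s(a, b)) with h1 | h1
  · exact h1
  · exact absurd ⟨hadj, h1⟩ hne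

private lemma neg_colorable_of_balanced {G : SimpleGraph V} {σ : Sym2 V → ℤˣ} {n : ℕ}
    (h : BalancedColorable G σ n) : (negSubgraph G σ).Colorable (n * 2) := by
  classical
  obtain ⟨f, hf⟩ := h
  let K : SimpleGraph V :=
    { Adj := fun u v => (negSubgraph G σ).Adj u v ∧ f u = f v
      symm := ⟨fun u v hh => ⟨hh.1.symm, hh.2.symm⟩⟩
      loopless := ⟨fun v hh => (negSubgraph G σ).loopless.irrefl v hh.1⟩ }
  have hKle : ∀ {a b : V}, K.Adj a b → G.Adj a b := fun hh => hh.1.1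
  have hKneg : ∀ {a b : V}, K.Adj a b → σ s(a, b) = -1 := fun hh => hh.1.2
  have hsupf : ∀ {a b : V} (p : K.Walk a b), ∀ u ∈ p.support, f u = f a := by
    intro a b p
    induction p with
    | nil => intro u hu; rw [Walk.support_nil, List.mem_singleton] at hu; rw [hu]
    | @cons a c b h p ih =>
      intro u hu
      rw [Walk.support_cons, List.mem_cons] at hu
      rcases hu with rfl | hu
      · rfl
      · exact (ih u hu).trans h.2.symm
  have hKsubG : ∀ {a b : V} (p : K.Walk a b), ∀ e ∈ p.edges, e ∈ G.edgeSet := by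
    intro a b p e he
    have := p.edges_subset_edgeSet he
    revert this
    refine Sym2.ind (fun a b hh => ?_) e
    exact G.mem_edgeSet.mpr (hKle (K.mem_edgeSet.mp hh))
  have hev : ∀ (x : V) (c : K.Walk x x), c.IsCycle → Even c.length := by
    intro x c hc
    have hsub := hKsubG c
    have hc' : (c.transfer G hsub).IsCycle := hc.transfer hsub
    have hsupp : ∀ u ∈ (c.transfer G hsub).support, u ∈ {v | f v = f x} := by
      rw [Walk.support_transfer]
      intro u hu
      exact hsupf c u hu
    have h1 : walkSign σ (c.transfer G hsub) = 1 := hf (f x) (c.transfer G hsub) hc' hsupp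
    have h2 : walkSign σ (c.transfer G hsub) = (-1) ^ c.length := by
      unfold walkSign
      rw [Walk.edges_transfer]
      have := List.prod_eq_pow_card (c.edges.map σ) (-1) (fun y hy => by
        obtain ⟨e, he, rfl⟩ := List.mem_map.mp hy
        have heK := c.edges_subset_edgeSet he
        revert heK
        refine Sym2.ind (fun a b hh => ?_) e
        exact hKneg (K.mem_edgeSet.mp hh))
      rw [this, List.length_map, Walk.length_edges]
    rw [h1] at h2
    by_contra hodd
    rw [Nat.not_even_iff_odd] at hodd
    rw [Odd.neg_one_pow hodd] at h2
    exact absurd h2.symm (by decide)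
  obtain ⟨g, hg⟩ := exists_bicoloring hev
  have C : (negSubgraph G σ).Coloring (Fin n × Bool) :=
    SimpleGraph.Coloring.mk (fun v => (f v, g v)) (by
      intro u v huv hEq
      have h1 : f u = f v := congrArg Prod.fst hEq
      have h2 : g u = g v := congrArg Prod.snd hEq
      exact hg u v ⟨huv, h1⟩ h2)
  have := C.colorable
  simpa [Fintype.card_prod] using this

end Main

/-- a family of signed graphs has bounded balanced chromatic number iff
the negative subgraphs have bounded chromatic number. -/
theorem stmt3 {ι : Type*} (V : ι → Type*) [∀ i, Fintype (V i)]
    (G : ∀ i, SimpleGraph (V i)) (σ : ∀ i, Sym2 (V i) → ℤˣ) :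
    (∃ c : ℕ, ∀ i, balancedChromNum (G i) (σ i) ≤ c) ↔
      ∃ c' : ℕ, ∀ i, (negSubgraph (G i) (σ i)).chromaticNumber ≤ (c' : ℕ∞) := by
  constructor
  · rintro ⟨c, hc⟩
    refine ⟨c * 2, fun i => ?_⟩
    have hS : BalancedColorable (G i) (σ i) (balancedChromNum (G i) (σ i)) := by
      have hne : {n | BalancedColorable (G i) (σ i) n}.Nonempty :=
        ⟨_, balancedColorable_card (σ i)⟩
      exact Nat.sInf_mem hne
    have hcc : BalancedColorable (G i) (σ i) c := balancedColorable_mono hS (hc i)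
    exact (neg_colorable_of_balanced hcc).chromaticNumber_le
  · rintro ⟨c', hc'⟩
    refine ⟨c', fun i => ?_⟩
    obtain ⟨C⟩ : (negSubgraph (G i) (σ i)).Colorable c' :=
      SimpleGraph.chromaticNumber_le_iff_colorable.mp (hc' i)
    exact Nat.sInf_le (balanced_of_coloring C)

end SignedGS
end

section
/- For every positive integer c there exists a signed graph (G, σ) such that: (i) every triangle of (G, σ) has positive sign (equivalently, no induced subgraph of (G, σ) is switching equivalent to the all-negative triangle (K_3, −)); (ii) the underlying graph G contains no induced copy of the star K_{1,4}; and (iii) χ_b(G, σ) > c. -/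
open SimpleGraph

namespace SignedGS

variable {V : Type*}

section WalkSign

variable {W : Type*} {Γ : SimpleGraph W} (σ : Sym2 W → ℤˣ)

@[simp] lemma walkSign_nil {u : W} : walkSign σ (Walk.nil : Γ.Walk u u) = 1 := by
  simp [walkSign]

@[simp] lemma walkSign_cons {u v x : W} (h : Γ.Adj u v) (w : Γ.Walk v x) :
    walkSign σ (Walk.cons h w) = σ s(u, v) * walkSign σ w := by
  simp [walkSign]

lemma walkSign_append {u v x : W} (w1 : Γ.Walk u v) (w2 : Γ.Walk v x) :
    walkSign σ (w1.append w2) = walkSign σ w1 * walkSign σ w2 := by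
  simp [walkSign, Walk.edges_append]

lemma walkSign_concat {u v x : W} (w : Γ.Walk u v) (h : Γ.Adj v x) :
    walkSign σ (w.concat h) = walkSign σ w * σ s(v, x) := by
  simp [walkSign, Walk.edges_concat]

/-- In a balanced set, every closed walk (not just every cycle) is positive. -/
lemma closed_walkSign {S : Set W} (hS : IsBalancedSet Γ σ S) :
    ∀ (m : ℕ) {u : W} (w : Γ.Walk u u), w.length ≤ m → (∀ x ∈ w.support, x ∈ S) →
      walkSign σ w = 1 := by
  classical
  intro m
  induction m with
  | zero =>
    intro u w hlen _
    cases w with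
    | nil => simp
    | cons h p => simp at hlen
  | succ m ih =>
    intro u w hlen hsupp
    by_cases hnd : w.support.tail.Nodup
    · -- small cases or a genuine cycle
      cases w with
      | nil => simp
      | @cons _ v _ h p =>
        have hpath : p.IsPath := by
          rw [Walk.isPath_def]
          simpa using hnd
        cases p with
        | nil => exact absurd h (Γ.loopless.irrefl u)
        | @cons _ x _ h2 p2 =>
          cases p2 with
          | nil =>
            -- length two walk u - v - u
            simp only [walkSign, Walk.edges_cons, Walk.edges_nil, List.map_cons, List.map_nil,
              List.prod_cons, List.prod_nil, mul_one]
            rw [Sym2.eq_swap (a := v) (b := u)]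
            exact Int.units_mul_self _
          | @cons _ y _ h3 p3 =>
            -- length ≥ 3 and support tail nodup: it is a cycle
            have hcyc : (Walk.cons h (Walk.cons h2 (Walk.cons h3 p3))).IsCycle := by
              rw [Walk.cons_isCycle_iff]
              refine ⟨hpath, ?_⟩
              intro hmem
              rw [Walk.edges_cons] at hmem
              rcases List.mem_cons.mp hmem with heq | hmem2
              · -- s(u,v) = s(v,x) forces x = u
                have hx : x = u := by
                  rcases Sym2.eq_iff.mp heq with ⟨h1, _⟩ | ⟨h1, _⟩
                  · exact absurd h1 h.ne
                  · exact h1.symm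
                subst hx
                -- then (cons h3 p3) : Walk u u and its support has u twice, contradicting path
                have hnd2 := (Walk.isPath_def _).mp hpath
                rw [Walk.support_cons, Walk.support_cons] at hnd2
                rcases List.nodup_cons.mp hnd2 with ⟨_, hnd3⟩
                rcases List.nodup_cons.mp hnd3 with ⟨hu, _⟩
                exact hu (Walk.end_mem_support p3)
              · -- s(u,v) in later edges: v appears twice in support of path
                have hv : v ∈ (Walk.cons h3 p3).support :=
                  Walk.snd_mem_support_of_mem_edges _ hmem2
                have hnd2 := (Walk.isPath_def _).mp hpath
                rw [Walk.support_cons] at hnd2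
                exact (List.nodup_cons.mp hnd2).1 hv
            exact hS _ hcyc hsupp
    · -- a repeated vertex: rotate and split
      obtain ⟨x, hdup⟩ := List.exists_duplicate_iff_not_nodup.mpr hnd
      have hcount : 2 ≤ w.support.tail.count x := List.duplicate_iff_two_le_count.mp hdup
      have hxsup : x ∈ w.support := List.mem_of_mem_tail hdup.mem
      obtain ⟨wr, hedges, htail⟩ :
          ∃ wr : Γ.Walk x x, (wr.edges ~r w.edges) ∧ wr.support.tail ~r w.support.tail :=
        ⟨w.rotate x hxsup, Walk.rotate_edges w x hxsup, Walk.support_rotate w x hxsup⟩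
      have hsign_rot : walkSign σ wr = walkSign σ w := (hedges.perm.map σ).prod_eq
      have hlen_rot : wr.length = w.length := by
        rw [← Walk.length_edges, ← Walk.length_edges]
        exact hedges.perm.length_eq
      have htailS : ∀ y ∈ wr.support.tail, y ∈ S := fun y hy =>
        hsupp y (List.mem_of_mem_tail (htail.perm.mem_iff.mp hy))
      have hcount' : 2 ≤ wr.support.tail.count x := by
        rw [htail.perm.count_eq]; exact hcount
      cases wr with
      | nil => simp at hcount'
      | cons h1 p1 =>
        rename_i v1
        rw [Walk.support_cons, List.tail_cons] at hcount' htailS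
        have hx1 : x ∈ p1.support := by
          have : 0 < p1.support.count x := by omega
          exact List.count_pos_iff.mp this
        obtain ⟨q1, q2, hspec, hq1c⟩ :
            ∃ (q1 : Γ.Walk v1 x) (q2 : Γ.Walk x x),
              q1.append q2 = p1 ∧ q1.support.count x = 1 :=
          ⟨_, _, p1.take_spec hx1, p1.count_support_takeUntil_eq_one hx1⟩
        have hlen_split : q1.length + q2.length = p1.length := by
          rw [← hspec, Walk.length_append]
        have hsup_split : p1.support = q1.support ++ q2.support.tail := by
          rw [← hspec, Walk.support_append]
        have hq2count : 1 ≤ q2.support.tail.count x := by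
          have := hcount'
          rw [hsup_split, List.count_append, hq1c] at this
          omega
        have hq2len : 1 ≤ q2.length := by
          by_contra hq2
          have h0 : q2.length = 0 := by omega
          have : q2.support = [x] := by
            cases q2 with
            | nil => simp
            | cons h p => simp at h0
          rw [this] at hq2count
          simp at hq2count
        have hlenw : w.length ≤ m + 1 := hlen
        have hlenp1 : p1.length + 1 = w.length := by
          rw [← hlen_rot]; simp
        -- two shorter closed walks
        have hq1S : ∀ y ∈ q1.support, y ∈ S := fun y hy =>
          htailS y (by rw [hsup_split]; exact List.mem_append_left _ hy)
        have hq2S : ∀ y ∈ q2.support, y ∈ S := by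
          intro y hy
          cases q2 with
          | nil => simp at hy; subst hy; exact hsupp _ hxsup
          | cons hq pq =>
            rw [Walk.support_cons] at hy
            rcases List.mem_cons.mp hy with rfl | hy2
            · exact hsupp _ hxsup
            · exact htailS y (by
                rw [hsup_split]
                refine List.mem_append_right _ ?_
                simpa using hy2)
        have ihw1 : walkSign σ (Walk.cons h1 q1) = 1 := by
          apply ih (Walk.cons h1 q1) (by simp; omega)
          intro y hy
          rw [Walk.support_cons] at hy
          rcases List.mem_cons.mp hy with rfl | hy2
          · exact hsupp _ hxsup
          · exact hq1S y hy2
        have ihw2 : walkSign σ q2 = 1 := ih q2 (by omega) hq2S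
        have : walkSign σ (Walk.cons h1 p1) = 1 := by
          have hps : walkSign σ p1 = walkSign σ q1 * walkSign σ q2 := by
            rw [← hspec, walkSign_append]
          rw [walkSign_cons, hps, ← mul_assoc]
          have : σ s(x, v1) * walkSign σ q1 = 1 := by
            rw [← walkSign_cons (h := h1)]; exact ihw1
          rw [this, one_mul]
          exact ihw2
        rw [← hsign_rot]
        exact this

end WalkSign

/-- A graph in which every closed walk has even length admits a proper 2-coloring. -/
lemma two_coloring_of_even_closed {α : Type*} (Γ : SimpleGraph α)
    (h : ∀ (p : α) (w : Γ.Walk p p), Even w.length) :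
    ∃ g : α → Fin 2, ∀ p q, Γ.Adj p q → g p ≠ g q := by
  classical
  have hrep : ∀ p : α, Γ.Reachable ((Γ.connectedComponentMk p).out) p := fun p =>
    ConnectedComponent.eq.mp ((Γ.connectedComponentMk p).out_eq)
  refine ⟨fun p => if ∃ w : Γ.Walk ((Γ.connectedComponentMk p).out) p, Even w.length
    then 0 else 1, ?_⟩
  intro p q hadj
  have hcomp : Γ.connectedComponentMk p = Γ.connectedComponentMk q :=
    ConnectedComponent.sound hadj.reachable
  set r := (Γ.connectedComponentMk p).out with hr
  have hrq : (Γ.connectedComponentMk q).out = r := by rw [hr, hcomp]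
  by_cases hp : ∃ w : Γ.Walk ((Γ.connectedComponentMk p).out) p, Even w.length <;>
    by_cases hq : ∃ w : Γ.Walk ((Γ.connectedComponentMk q).out) q, Even w.length
  · exfalso
    obtain ⟨w1, e1⟩ := hp
    obtain ⟨w2, e2⟩ := hq
    have wc : Γ.Walk r r :=
      (w1.append hadj.toWalk).append ((w2.copy hrq rfl).reverse)
    have hlen := h r ((w1.append hadj.toWalk).append ((w2.copy hrq rfl).reverse))
    rw [Walk.length_append, Walk.length_append, Walk.length_reverse, Walk.length_copy] at hlen
    obtain ⟨a, ha⟩ := e1; obtain ⟨b, hb⟩ := e2; obtain ⟨d, hd⟩ := hlen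
    simp only [Walk.length_cons, Walk.length_nil] at hd
    omega
  · simp [hp, hq]
  · simp [hp, hq]
  · exfalso
    obtain ⟨w1⟩ := hrep p
    obtain ⟨w2⟩ := hrep q
    have o1 : ¬ Even w1.length := fun he => hp ⟨w1, he⟩
    have o2 : ¬ Even w2.length := fun he => hq ⟨w2, he⟩
    have hlen := h r ((w1.append hadj.toWalk).append ((w2.copy hrq rfl).reverse))
    rw [Walk.length_append, Walk.length_append, Walk.length_reverse, Walk.length_copy] at hlen
    rw [Nat.not_even_iff_odd] at o1 o2
    obtain ⟨a, ha⟩ := o1; obtain ⟨b, hb⟩ := o2; obtain ⟨d, hd⟩ := hlen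
    simp only [Walk.length_cons, Walk.length_nil] at hd
    omega

/-! ### The construction: line graph of the shift graph -/

/-- Vertices: strictly increasing triples in `Fin n`. -/
abbrev TriV (n : ℕ) : Type := {x : Fin n × Fin n × Fin n // x.1 < x.2.1 ∧ x.2.1 < x.2.2}

/-- The first pair of a triple. -/
def lo {n : ℕ} (t : TriV n) : Fin n × Fin n := (t.1.1, t.1.2.1)

/-- The second pair of a triple. -/
def hi {n : ℕ} (t : TriV n) : Fin n × Fin n := (t.1.2.1, t.1.2.2)

lemma lo_ne_hi {n : ℕ} (t : TriV n) : lo t ≠ hi t := by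
  intro h
  have h1 : t.1.1 = t.1.2.1 := congrArg Prod.fst h
  have := t.2.1
  rw [h1] at this
  exact lt_irrefl _ this

/-- The underlying graph: triples are adjacent iff they share one of their two pairs. -/
def triG (n : ℕ) : SimpleGraph (TriV n) where
  Adj t u := t ≠ u ∧ (lo t = lo u ∨ lo t = hi u ∨ hi t = lo u ∨ hi t = hi u)
  symm := by
    constructor
    rintro t u ⟨hne, h⟩
    refine ⟨hne.symm, ?_⟩
    rcases h with h | h | h | h
    · exact Or.inl h.symm
    · exact Or.inr (Or.inr (Or.inl h.symm))
    · exact Or.inr (Or.inl h.symm)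
    · exact Or.inr (Or.inr (Or.inr h.symm))
  loopless := ⟨fun t h => h.1 rfl⟩

lemma triG_adj_of_common {n : ℕ} {t u : TriV n} {p : Fin n × Fin n} (hne : t ≠ u)
    (ht : lo t = p ∨ hi t = p) (hu : lo u = p ∨ hi u = p) : (triG n).Adj t u := by
  refine ⟨hne, ?_⟩
  rcases ht with ht | ht <;> rcases hu with hu | hu
  · exact Or.inl (ht.trans hu.symm)
  · exact Or.inr (Or.inl (ht.trans hu.symm))
  · exact Or.inr (Or.inr (Or.inl (ht.trans hu.symm)))
  · exact Or.inr (Or.inr (Or.inr (ht.trans hu.symm)))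

/-- The signature: `-1` exactly for "consecutive" sharing. -/
def triSig (n : ℕ) : Sym2 (TriV n) → ℤˣ :=
  Sym2.lift ⟨fun t u => if hi t = lo u ∨ hi u = lo t then (-1 : ℤˣ) else 1, by
    intro t u
    simp only []
    by_cases h : hi t = lo u ∨ hi u = lo t
    · rw [if_pos h, if_pos h.symm]
    · rw [if_neg h, if_neg (fun hc => h hc.symm)]⟩

/-- Local sign of a triple at a pair. -/
def esign {n : ℕ} (t : TriV n) (p : Fin n × Fin n) : ℤˣ := if hi t = p then -1 else 1

lemma esign_mul_self {n : ℕ} (t : TriV n) (p : Fin n × Fin n) :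
    esign t p * esign t p = 1 := Int.units_mul_self _

lemma esign_pairs {n : ℕ} {t : TriV n} {p q : Fin n × Fin n}
    (h : (lo t = p ∧ hi t = q) ∨ (lo t = q ∧ hi t = p)) :
    esign t p * esign t q = -1 := by
  rcases h with ⟨h1, h2⟩ | ⟨h1, h2⟩
  · have e1 : esign t p = 1 := by
      rw [esign, if_neg]
      intro hc
      exact lo_ne_hi t (h1.trans hc.symm)
    have e2 : esign t q = -1 := by rw [esign, if_pos h2]
    rw [e1, e2, one_mul]
  · have e1 : esign t p = -1 := by rw [esign, if_pos h2]
    have e2 : esign t q = 1 := by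
      rw [esign, if_neg]
      intro hc
      exact lo_ne_hi t (h1.trans hc.symm)
    rw [e1, e2, mul_one]

lemma esign_pairs' {n : ℕ} {t : TriV n} {p q : Fin n × Fin n}
    (h : (lo t = p ∧ hi t = q) ∨ (lo t = q ∧ hi t = p)) :
    esign t q = - esign t p := by
  have h1 := esign_pairs h
  have h2 := esign_mul_self t p
  calc esign t q = (esign t p * esign t p) * esign t q := by rw [h2, one_mul]
  _ = esign t p * (esign t p * esign t q) := by rw [mul_assoc]
  _ = esign t p * (-1) := by rw [h1]
  _ = - esign t p := by rw [mul_neg, mul_one]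

lemma triSig_eq {n : ℕ} {t u : TriV n} {p : Fin n × Fin n}
    (ht : lo t = p ∨ hi t = p) (hu : lo u = p ∨ hi u = p) :
    triSig n s(t, u) = esign t p * esign u p := by
  have hlift : triSig n s(t, u) = if hi t = lo u ∨ hi u = lo t then (-1 : ℤˣ) else 1 := rfl
  rcases ht with ht | ht <;> rcases hu with hu | hu
  · -- lo t = p, lo u = p
    rw [hlift, if_neg, esign, if_neg, esign, if_neg, one_mul]
    · intro hc; exact lo_ne_hi u (hu.trans hc.symm)
    · intro hc; exact lo_ne_hi t (ht.trans hc.symm)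
    · rintro (hc | hc)
      · exact lo_ne_hi t (ht.trans (hc.trans hu).symm)
      · exact lo_ne_hi u (hu.trans (hc.trans ht).symm)
  · -- lo t = p, hi u = p
    rw [hlift, if_pos (Or.inr (hu.trans ht.symm)), esign, if_neg, esign, if_pos hu, one_mul]
    intro hc; exact lo_ne_hi t (ht.trans hc.symm)
  · -- hi t = p, lo u = p
    rw [hlift, if_pos (Or.inl (ht.trans hu.symm)), esign, if_pos ht, esign, if_neg, mul_one]
    intro hc; exact lo_ne_hi u (hu.trans hc.symm)
  · -- hi t = p, hi u = p
    rw [hlift, if_neg, esign, if_pos ht, esign, if_pos hu]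
    · simp
    · rintro (hc | hc)
      · exact lo_ne_hi u ((hc.symm.trans ht).trans hu.symm)
      · exact lo_ne_hi t ((hc.symm.trans hu).trans ht.symm)

lemma tri_key {n : ℕ} (t : TriV n) :
    (lo t).1.val < (lo t).2.val ∧ (lo t).2.val = (hi t).1.val ∧ (hi t).1.val < (hi t).2.val :=
  ⟨t.2.1, rfl, t.2.2⟩

lemma two_pairs {n : ℕ} {t : TriV n} {p q : Fin n × Fin n} (hpq : p ≠ q)
    (hp : lo t = p ∨ hi t = p) (hq : lo t = q ∨ hi t = q) :
    (lo t = p ∧ hi t = q) ∨ (lo t = q ∧ hi t = p) := by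
  rcases hp with hp | hp <;> rcases hq with hq | hq
  · exact absurd (hp.symm.trans hq) hpq
  · exact Or.inl ⟨hp, hq⟩
  · exact Or.inr ⟨hq, hp⟩
  · exact absurd (hp.symm.trans hq) hpq

private lemma pair_fst {n : ℕ} {P Q : Fin n × Fin n} (h : P = Q) : P.1.val = Q.1.val := by
  rw [h]

private lemma pair_snd {n : ℕ} {P Q : Fin n × Fin n} (h : P = Q) : P.2.val = Q.2.val := by
  rw [h]

/-- Three pairwise adjacent triples share a common pair (shift graph is triangle-free). -/
lemma common_pair {n : ℕ} {t u v : TriV n} (htu : (triG n).Adj t u) (huv : (triG n).Adj u v)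
    (htv : (triG n).Adj t v) :
    ∃ p, (lo t = p ∨ hi t = p) ∧ (lo u = p ∨ hi u = p) ∧ (lo v = p ∨ hi v = p) := by
  have hshare : ∀ {a b : TriV n}, (triG n).Adj a b →
      ∃ p, (lo a = p ∨ hi a = p) ∧ (lo b = p ∨ hi b = p) := by
    rintro a b ⟨_, h | h | h | h⟩
    · exact ⟨lo b, Or.inl h, Or.inl rfl⟩
    · exact ⟨hi b, Or.inl h, Or.inr rfl⟩
    · exact ⟨lo b, Or.inr h, Or.inl rfl⟩
    · exact ⟨hi b, Or.inr h, Or.inr rfl⟩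
  obtain ⟨p, htp, hup⟩ := hshare htu
  obtain ⟨q, huq, hvq⟩ := hshare huv
  obtain ⟨r, htr, hvr⟩ := hshare htv
  by_cases hpq : p = q
  · exact ⟨p, htp, hup, hpq ▸ hvq⟩
  by_cases hpr : p = r
  · exact ⟨p, htp, hup, hpr ▸ hvr⟩
  by_cases hqr : q = r
  · exact ⟨q, hqr ▸ htr, huq, hvq⟩
  exfalso
  have hu2 := two_pairs hpq hup huq
  have ht2 := two_pairs hpr htp htr
  have hv2 := two_pairs hqr hvq hvr
  have Kt := tri_key t
  have Ku := tri_key u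
  have Kv := tri_key v
  rcases hu2 with ⟨e1, e2⟩ | ⟨e1, e2⟩ <;> rcases ht2 with ⟨e3, e4⟩ | ⟨e3, e4⟩ <;>
    rcases hv2 with ⟨e5, e6⟩ | ⟨e5, e6⟩ <;>
  · rw [e1, e2] at Ku
    rw [e3, e4] at Kt
    rw [e5, e6] at Kv
    obtain ⟨a1, a2, a3⟩ := Ku
    obtain ⟨b1, b2, b3⟩ := Kt
    obtain ⟨c1, c2, c3⟩ := Kv
    omega

/-- All triangles of the construction are positive. -/
lemma tri_pos (n : ℕ) : ∀ t u v : TriV n, (triG n).Adj t u → (triG n).Adj u v →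
    (triG n).Adj t v →
    triSig n s(t, u) * triSig n s(u, v) * triSig n s(t, v) = 1 := by
  intro t u v htu huv htv
  obtain ⟨p, htp, hup, hvp⟩ := common_pair htu huv htv
  rw [triSig_eq htp hup, triSig_eq hup hvp, triSig_eq htp hvp]
  have h1 := esign_mul_self t p
  have h2 := esign_mul_self u p
  have h3 := esign_mul_self v p
  calc esign t p * esign u p * (esign u p * esign v p) * (esign t p * esign v p)
      = (esign t p * esign t p) * ((esign u p * esign u p) * (esign v p * esign v p)) := by
        ac_rfl
    _ = 1 := by rw [h1, h2, h3, one_mul, one_mul]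


lemma no_star {n : ℕ} : ¬ HasInducedCopy (starGraph 4) (triG n) := by
  rintro ⟨f, hf⟩
  have hadj : ∀ k : Fin 5, k ≠ 0 → (triG n).Adj (f 0) (f k) := by
    intro k hk
    exact (hf 0 k).mpr ⟨Or.inl rfl, hk.symm⟩
  have hnadj : ∀ k l : Fin 5, k ≠ 0 → l ≠ 0 → k ≠ l → ¬ (triG n).Adj (f k) (f l) := by
    intro k l hk hl hkl ha
    have := (hf k l).mp ha
    rcases this.1 with h | h
    · exact hk h
    · exact hl h
  -- each leaf shares either `lo (f 0)` or `hi (f 0)`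
  have hside : ∀ k : Fin 5, k ≠ 0 →
      (lo (f k) = lo (f 0) ∨ hi (f k) = lo (f 0)) ∨
      (lo (f k) = hi (f 0) ∨ hi (f k) = hi (f 0)) := by
    intro k hk
    rcases hadj k hk with ⟨_, h | h | h | h⟩
    · exact Or.inl (Or.inl h.symm)
    · exact Or.inl (Or.inr h.symm)
    · exact Or.inr (Or.inl h.symm)
    · exact Or.inr (Or.inr h.symm)
  have hcom : ∀ k l : Fin 5, k ≠ 0 → l ≠ 0 → k ≠ l → ∀ P : Fin n × Fin n,
      (lo (f k) = P ∨ hi (f k) = P) → (lo (f l) = P ∨ hi (f l) = P) → False := by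
    intro k l hk hl hkl P h1 h2
    exact hnadj k l hk hl hkl (triG_adj_of_common (f.injective.ne hkl) h1 h2)
  have h1 := hside 1 (by decide)
  have h2 := hside 2 (by decide)
  have h3 := hside 3 (by decide)
  rcases h1 with h1 | h1 <;> rcases h2 with h2 | h2 <;> rcases h3 with h3 | h3
  · exact hcom 1 2 (by decide) (by decide) (by decide) _ h1 h2
  · exact hcom 1 2 (by decide) (by decide) (by decide) _ h1 h2
  · exact hcom 1 3 (by decide) (by decide) (by decide) _ h1 h3
  · exact hcom 2 3 (by decide) (by decide) (by decide) _ h2 h3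
  · exact hcom 2 3 (by decide) (by decide) (by decide) _ h2 h3
  · exact hcom 1 3 (by decide) (by decide) (by decide) _ h1 h3
  · exact hcom 1 2 (by decide) (by decide) (by decide) _ h1 h2
  · exact hcom 1 2 (by decide) (by decide) (by decide) _ h1 h2

/-- The graph on pairs whose edges are witnessed by triples satisfying `P`. -/
def classGraph (n : ℕ) (P : TriV n → Prop) : SimpleGraph (Fin n × Fin n) where
  Adj p q := ∃ t : TriV n, P t ∧ ((lo t = p ∧ hi t = q) ∨ (lo t = q ∧ hi t = p))
  symm := by
    constructor
    rintro p q ⟨t, hPt, h⟩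
    exact ⟨t, hPt, h.symm⟩
  loopless := by
    constructor
    rintro p ⟨t, _, ⟨h1, h2⟩ | ⟨h1, h2⟩⟩ <;> exact lo_ne_hi t (h1.trans h2.symm)

/-- Lifting a walk in a class graph to a walk of triples. -/
lemma lift_walk {n : ℕ} {P : TriV n → Prop} :
    ∀ {q r : Fin n × Fin n} (w : (classGraph n P).Walk q r), 1 ≤ w.length →
    ∃ (t₀ t₁ : TriV n) (W : (triG n).Walk t₀ t₁),
      (∀ x ∈ W.support, P x) ∧ (lo t₀ = q ∨ hi t₀ = q) ∧ (lo t₁ = r ∨ hi t₁ = r) ∧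
      walkSign (triSig n) W = (-1 : ℤˣ) ^ w.length * esign t₀ q * esign t₁ r := by
  intro q r w
  induction w with
  | nil => intro h; simp at h
  | @cons q q' r h w' ih =>
    intro _
    obtain ⟨t, hPt, hpair⟩ := id h
    have htq : lo t = q ∨ hi t = q := by
      rcases hpair with ⟨h1, _⟩ | ⟨_, h2⟩
      · exact Or.inl h1
      · exact Or.inr h2
    have htq' : lo t = q' ∨ hi t = q' := by
      rcases hpair with ⟨_, h2⟩ | ⟨h1, _⟩
      · exact Or.inr h2
      · exact Or.inl h1
    have hEq' : esign t q' = - esign t q := esign_pairs' hpair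
    rcases Nat.eq_zero_or_pos w'.length with h0 | h1
    · -- w' is trivial: q' = r
      have hqr : q' = r := Walk.eq_of_length_eq_zero h0
      subst hqr
      refine ⟨t, t, Walk.nil, ?_, htq, htq', ?_⟩
      · intro x hx
        simp at hx
        subst hx
        exact hPt
      · rw [walkSign_nil, Walk.length_cons, h0]
        rw [pow_one, hEq']
        have := esign_mul_self t q
        calc (1 : ℤˣ) = esign t q * esign t q := this.symm
          _ = -1 * esign t q * - esign t q := by
              rw [neg_one_mul, neg_mul_neg]
    · obtain ⟨t₀, t₁, W, hWP, hl₀, hl₁, hsgn⟩ := ih h1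
      by_cases hts : t = t₀
      · subst hts
        refine ⟨t, t₁, W, hWP, htq, hl₁, ?_⟩
        rw [hsgn, Walk.length_cons, pow_succ]
        have : esign t q' = - esign t q := hEq'
        rw [this]
        calc (-1 : ℤˣ) ^ w'.length * - esign t q * esign t₁ r
            = (-1 : ℤˣ) ^ w'.length * -1 * esign t q * esign t₁ r := by
              rw [mul_assoc ((-1 : ℤˣ) ^ w'.length) (-1 : ℤˣ), neg_one_mul]
          _ = (-1 : ℤˣ) ^ w'.length * (-1 : ℤˣ) * esign t q * esign t₁ r := rfl
      · have hadj : (triG n).Adj t t₀ := triG_adj_of_common hts htq' hl₀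
        refine ⟨t, t₁, Walk.cons hadj W, ?_, htq, hl₁, ?_⟩
        · intro x hx
          rw [Walk.support_cons] at hx
          rcases List.mem_cons.mp hx with rfl | hx2
          · exact hPt
          · exact hWP x hx2
        · rw [walkSign_cons, hsgn, triSig_eq htq' hl₀, Walk.length_cons, pow_succ]
          have h2 := esign_mul_self t₀ q'
          calc esign t q' * esign t₀ q' *
                ((-1 : ℤˣ) ^ w'.length * esign t₀ q' * esign t₁ r)
              = (esign t₀ q' * esign t₀ q') *
                ((-1 : ℤˣ) ^ w'.length * esign t q' * esign t₁ r) := by ac_rfl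
            _ = (-1 : ℤˣ) ^ w'.length * esign t q' * esign t₁ r := by rw [h2, one_mul]
            _ = (-1 : ℤˣ) ^ w'.length * - esign t q * esign t₁ r := by rw [hEq']
            _ = (-1 : ℤˣ) ^ w'.length * -1 * esign t q * esign t₁ r := by
                rw [mul_assoc ((-1 : ℤˣ) ^ w'.length) (-1 : ℤˣ), neg_one_mul]

/-- A `ℤˣ` parity fact. -/
lemma even_of_neg_one_pow {m : ℕ} (h : (-1 : ℤˣ) ^ m = 1) : Even m := by
  by_contra ho
  rw [Nat.not_even_iff_odd] at ho
  rw [ho.neg_one_pow] at h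
  exact absurd h (by decide)

/-- Every closed walk of a class graph of a balanced class has even length. -/
lemma even_closed {n : ℕ} {c : ℕ} {f : TriV n → Fin c}
    (hbal : ∀ i : Fin c, IsBalancedSet (triG n) (triSig n) {v | f v = i}) (i : Fin c) :
    ∀ {p : Fin n × Fin n} (w : (classGraph n (f · = i)).Walk p p), Even w.length := by
  intro p w
  rcases Nat.eq_zero_or_pos w.length with h0 | h1
  · rw [h0]; exact Even.zero
  obtain ⟨t₀, t₁, W, hWP, hl₀, hl₁, hsgn⟩ := lift_walk w h1
  have hS : ∀ x ∈ W.support, x ∈ {v | f v = i} := fun x hx => hWP x hx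
  by_cases hts : t₀ = t₁
  · subst hts
    have hone : walkSign (triSig n) W = 1 :=
      closed_walkSign (triSig n) (hbal i) W.length W le_rfl hS
    rw [hone] at hsgn
    apply even_of_neg_one_pow
    have := esign_mul_self t₀ p
    calc (-1 : ℤˣ) ^ w.length
        = (-1 : ℤˣ) ^ w.length * (esign t₀ p * esign t₀ p) := by rw [this, mul_one]
      _ = (-1 : ℤˣ) ^ w.length * esign t₀ p * esign t₀ p := by rw [mul_assoc]
      _ = 1 := hsgn.symm
  · have hadj : (triG n).Adj t₁ t₀ := triG_adj_of_common (fun hc => hts hc.symm) hl₁ hl₀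
    have hone : walkSign (triSig n) (W.concat hadj) = 1 := by
      apply closed_walkSign (triSig n) (hbal i) (W.concat hadj).length _ le_rfl
      intro x hx
      rw [Walk.support_concat] at hx
      rcases List.mem_append.mp hx with hx2 | hx3
      case inr =>
        rw [List.mem_singleton] at hx3
        subst hx3
        exact hS _ W.start_mem_support
      · exact hS x hx2
    rw [walkSign_concat, hsgn, triSig_eq hl₁ hl₀] at hone
    apply even_of_neg_one_pow
    have e0 := esign_mul_self t₀ p
    have e1 := esign_mul_self t₁ p
    calc (-1 : ℤˣ) ^ w.length
        = (-1 : ℤˣ) ^ w.length * esign t₀ p * esign t₁ p * (esign t₁ p * esign t₀ p) := by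
          calc (-1 : ℤˣ) ^ w.length
              = (-1 : ℤˣ) ^ w.length * ((esign t₀ p * esign t₀ p) *
                (esign t₁ p * esign t₁ p)) := by rw [e0, e1, one_mul, mul_one]
            _ = (-1 : ℤˣ) ^ w.length * esign t₀ p * esign t₁ p *
                (esign t₁ p * esign t₀ p) := by ac_rfl
      _ = 1 := hone

/-- The main counting argument: with `n = 2^(2^c) + 1` the construction is not
balanced `c`-colorable. -/
lemma not_colorable (c : ℕ) :
    ¬ BalancedColorable (triG (2 ^ 2 ^ c + 1)) (triSig (2 ^ 2 ^ c + 1)) c := by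
  classical
  set n := 2 ^ 2 ^ c + 1 with hn
  rintro ⟨f, hbal⟩
  -- proper 2-colorings of the class graphs
  have hg : ∀ i : Fin c, ∃ g : Fin n × Fin n → Fin 2,
      ∀ p q, (classGraph n (f · = i)).Adj p q → g p ≠ g q := by
    intro i
    exact two_coloring_of_even_closed _ (fun p w => even_closed hbal i w)
  choose g hgp using hg
  -- the key coloring of pairs
  have key : ∀ t : TriV n, g (f t) (lo t) ≠ g (f t) (hi t) := by
    intro t
    exact hgp (f t) (lo t) (hi t) ⟨t, rfl, Or.inl ⟨rfl, rfl⟩⟩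
  -- the shift-graph pigeonhole
  let φ : Fin n → Fin n → (Fin c → Fin 2) := fun a b => fun i => g i (a, b)
  let A : Fin n → Finset (Fin c → Fin 2) := fun b =>
    (Finset.univ.filter (fun a => a < b)).image (fun a => φ a b)
  have hlt : ∀ a b : Fin n, a < b → A a ≠ A b := by
    intro a b hab hAB
    have hmem : φ a b ∈ A b :=
      Finset.mem_image.mpr ⟨a, Finset.mem_filter.mpr ⟨Finset.mem_univ _, hab⟩, rfl⟩
    rw [← hAB] at hmem
    obtain ⟨k, hk, heq⟩ := Finset.mem_image.mp hmem
    have hka : k < a := (Finset.mem_filter.mp hk).2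
    -- the triple (k, a, b)
    let t : TriV n := ⟨(k, a, b), ⟨hka, hab⟩⟩
    have hlo : lo t = (k, a) := rfl
    have hhi : hi t = (a, b) := rfl
    have := key t
    rw [hlo, hhi] at this
    apply this
    have h1 : φ k a (f t) = g (f t) (k, a) := rfl
    have h2 : φ a b (f t) = g (f t) (a, b) := rfl
    rw [← h1, ← h2, heq]
  have hinj : Function.Injective A := by
    intro a b hab
    by_contra hne
    rcases lt_or_gt_of_ne hne with h | h
    · exact hlt a b h hab
    · exact hlt b a h hab.symm
  have hcard := Fintype.card_le_of_injective A hinj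
  rw [Fintype.card_fin, Fintype.card_finset, Fintype.card_fun, Fintype.card_fin,
    Fintype.card_fin] at hcard
  omega

/-- Monotonicity of balanced colorability. -/
lemma colorable_mono {α : Type*} (Γ : SimpleGraph α) (σ : Sym2 α → ℤˣ) {k l : ℕ} (hkl : k ≤ l)
    (h : BalancedColorable Γ σ k) : BalancedColorable Γ σ l := by
  obtain ⟨f, hf⟩ := h
  refine ⟨fun v => Fin.castLE hkl (f v), fun i v w hcyc hsup => ?_⟩
  apply hf (f v) w hcyc
  intro x hx
  have h1 : Fin.castLE hkl (f x) = i := hsup x hx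
  have h2 : Fin.castLE hkl (f v) = i := hsup v w.start_mem_support
  exact Fin.castLE_injective hkl (h1.trans h2.symm)

/-- Any finite signed graph is balanced colorable with one color per vertex. -/
lemma colorable_card {α : Type*} [Fintype α] (Γ : SimpleGraph α) (σ : Sym2 α → ℤˣ) :
    BalancedColorable Γ σ (Fintype.card α) := by
  classical
  refine ⟨Fintype.equivFin α, fun i v w hcyc hsup => ?_⟩
  exfalso
  cases w with
  | nil => exact hcyc.ne_nil rfl
  | cons h p =>
    have h1 : (Fintype.equivFin α) v = i := hsup v (Walk.start_mem_support _)
    have h2 : (Fintype.equivFin α) _ = i := hsup _ (by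
      rw [Walk.support_cons]
      exact List.mem_cons_of_mem _ p.start_mem_support)
    have : v = _ := (Fintype.equivFin α).injective (h1.trans h2.symm)
    exact Γ.loopless.irrefl v (this ▸ h)


/-- {(K_3,−), K_{1,4}} is not a GS set. -/
theorem stmt7 (c : ℕ) (hc : 0 < c) :
    ∃ (V : Type) (_ : Fintype V) (G : SimpleGraph V) (σ : Sym2 V → ℤˣ),
      AllTrianglesPositive G σ ∧ ¬ HasInducedCopy (starGraph 4) G ∧
        c < balancedChromNum G σ := by
  refine ⟨TriV (2 ^ 2 ^ c + 1), inferInstance, triG _, triSig _, tri_pos _, no_star, ?_⟩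
  by_contra hle
  push_neg at hle
  have hne : {m | BalancedColorable (triG (2 ^ 2 ^ c + 1)) (triSig (2 ^ 2 ^ c + 1)) m}.Nonempty :=
    ⟨_, colorable_card _ _⟩
  have hmem := Nat.sInf_mem hne
  exact not_colorable c (colorable_mono _ _ hle hmem)

end SignedGS
end
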